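/- Let p be a positive integer, c : ZMod p ≃ ZMod p a bijection (a cycle of maximal length), and J_c = Σ_{i} E_{c(i), c(i+1)} its passage matrix. Let (B_l)_{l ∈ ZMod p} be a family of p-dimensional subspaces of the p×p complex matrices, mutually orthogonal with respect to the Hilbert–Schmidt inner product ⟨A, B⟩ = tr(A*B), with B_0 equal to the span of the diagonal matrix units {E_{k,k} : k ∈ ZMod p}. Then the following are equivalent: (a) left multiplication by J_c maps B_l onto B_{l+1} for every l ∈ ZMod p; (b) B_l = span{E_{c(k), c(k+l)} : k ∈ ZMod p} for every l ∈ ZMod p. -/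

import Mathlib

open Matrix

noncomputable section

/-- The passage matrix of the maximal-length cycle determined by a bijection `c`. -/
def passageMatrix (p : ℕ) [NeZero p] (c : ZMod p ≃ ZMod p) : Matrix (ZMod p) (ZMod p) ℂ :=
  ∑ i : ZMod p, Matrix.single (c i) (c (i + 1)) (1 : ℂ)

lemma passage_mul (p : ℕ) [NeZero p] (c : ZMod p ≃ ZMod p) (k m : ZMod p) :
    passageMatrix p c * Matrix.single (c k) (c m) (1 : ℂ)
      = Matrix.single (c (k - 1)) (c m) (1 : ℂ) := by
  unfold passageMatrix
  rw [Finset.sum_mul, Finset.sum_eq_single (k - 1)]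
  · rw [show k - 1 + 1 = k by ring, Matrix.single_mul_single_same, one_mul]
  · intro i _ hi
    apply Matrix.single_mul_single_of_ne
    intro h
    exact hi (eq_sub_of_add_eq (c.injective h))
  · simp

lemma map_span_eq (p : ℕ) [NeZero p] (c : ZMod p ≃ ZMod p) (l : ZMod p) :
    Submodule.map (LinearMap.mulLeft ℂ (passageMatrix p c))
      (Submodule.span ℂ
        (Set.range fun k : ZMod p => Matrix.single (c k) (c (k + l)) (1 : ℂ)))
    = Submodule.span ℂ
        (Set.range fun k : ZMod p => Matrix.single (c k) (c (k + (l + 1))) (1 : ℂ)) := by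
  rw [Submodule.map_span, ← Set.range_comp]
  congr 1
  ext x
  simp only [Set.mem_range, Function.comp]
  constructor
  · rintro ⟨k, rfl⟩
    refine ⟨k - 1, ?_⟩
    rw [LinearMap.mulLeft_apply, passage_mul]
    congr 2
    ring
  · rintro ⟨k, rfl⟩
    refine ⟨k + 1, ?_⟩
    rw [LinearMap.mulLeft_apply, passage_mul]
    congr 2 <;> ring

lemma span_zero_eq (p : ℕ) [NeZero p] (c : ZMod p ≃ ZMod p) :
    Submodule.span ℂ (Set.range fun k : ZMod p => Matrix.single k k (1 : ℂ))
    = Submodule.span ℂ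
        (Set.range fun k : ZMod p => Matrix.single (c k) (c (k + 0)) (1 : ℂ)) := by
  congr 1
  simp only [add_zero]
  exact (c.surjective.range_comp (fun k : ZMod p => Matrix.single k k (1 : ℂ))).symm

theorem stmt6 (p : ℕ) [NeZero p] (c : ZMod p ≃ ZMod p)
    (B : ZMod p → Submodule ℂ (Matrix (ZMod p) (ZMod p) ℂ))
    (hdim : ∀ l, Module.finrank ℂ (B l) = p)
    (horth : ∀ l l', l ≠ l' → ∀ x ∈ B l, ∀ y ∈ B l', Matrix.trace (xᴴ * y) = 0)
    (hB0 : B 0 = Submodule.span ℂ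
      (Set.range fun k : ZMod p => Matrix.single k k (1 : ℂ))) :
    (∀ l, Submodule.map (LinearMap.mulLeft ℂ (passageMatrix p c)) (B l) = B (l + 1)) ↔
    (∀ l, B l = Submodule.span ℂ
      (Set.range fun k : ZMod p => Matrix.single (c k) (c (k + l)) (1 : ℂ))) := by
  constructor
  · intro h
    have key : ∀ n : ℕ, B (n : ZMod p) = Submodule.span ℂ
        (Set.range fun k : ZMod p =>
          Matrix.single (c k) (c (k + (n : ZMod p))) (1 : ℂ)) := by
      intro n
      induction n with
      | zero =>
        simpa using hB0.trans (span_zero_eq p c)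
      | succ n ih =>
        have := h (n : ZMod p)
        rw [ih, map_span_eq] at this
        rw [show ((n + 1 : ℕ) : ZMod p) = (n : ZMod p) + 1 by push_cast; ring]
        exact this.symm
    intro l
    have : l = ((l.val : ℕ) : ZMod p) := (ZMod.natCast_rightInverse l).symm
    rw [this]
    exact key l.val
  · intro h l
    rw [h l, map_span_eq, h (l + 1)]
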